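/- Let x ∈ ℝ^n be nonnegative, ε ∈ (0, 1/10], λ₀ ≥ 0, and suppose for every i that P̂_i ∈ (P_i x − 1, P_i x] and Ĉ_i ∈ (C_i x − 1, C_i x], with p̂_i = (1+ε)^{P̂_i} and ĉ_i = (1−ε)^{Ĉ_i}. Fix j ∈ [n] with C_{ij} > 0 for some i. If Σ_{i∈[m_p]} P_{ij} p̂_i ≤ ((1+ε)²/(1−ε)) λ₀ Σ_{i∈[m_c]} C_{ij} ĉ_i, then Σ_{i∈[m_p]} P_{ij} p_i(x) ≤ (1+7ε) λ₀ Σ_{i∈[m_c]} C_{ij} c_i(x). In words: if the algorithm's estimated ratio test passes with threshold (1+ε)²λ₀/(1−ε), then the true ratio λ(x,j) is at most (1+7ε)λ₀. -/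

import Mathlib

/-- If the estimated ratio test passes with threshold
`(1+ε)² λ₀ / (1−ε)`, then the true ratio `λ(x,j)` is at most `(1+7ε) λ₀`. -/
theorem estimated_ratio_test_sound
    (mp mc n : ℕ) (hmp : 0 < mp) (hmc : 0 < mc) (hn : 0 < n)
    (P : Fin mp → Fin n → ℝ) (C : Fin mc → Fin n → ℝ)
    (hP : ∀ i j, 0 ≤ P i j) (hC : ∀ i j, 0 ≤ C i j)
    (x : Fin n → ℝ) (hx : ∀ j, 0 ≤ x j)
    (ε : ℝ) (hε : ε ∈ Set.Ioc (0 : ℝ) (1 / 10))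
    (lam0 : ℝ) (hlam0 : 0 ≤ lam0)
    (Ph : Fin mp → ℝ) (Ch : Fin mc → ℝ)
    (hPh : ∀ i, (∑ j, P i j * x j) - 1 < Ph i ∧ Ph i ≤ ∑ j, P i j * x j)
    (hCh : ∀ i, (∑ j, C i j * x j) - 1 < Ch i ∧ Ch i ≤ ∑ j, C i j * x j)
    (j : Fin n) (hj : ∃ i, 0 < C i j)
    (htest : (∑ i, P i j * (1 + ε) ^ (Ph i))
      ≤ ((1 + ε) ^ 2 / (1 - ε)) * lam0 * (∑ i, C i j * (1 - ε) ^ (Ch i))) :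
    (∑ i, P i j * (1 + ε) ^ (∑ j', P i j' * x j'))
      ≤ (1 + 7 * ε) * lam0 * (∑ i, C i j * (1 - ε) ^ (∑ j', C i j' * x j')) := by
  obtain ⟨hε0, hε10⟩ := hε
  have h1ε : (0:ℝ) < 1 + ε := by linarith
  have h1me : (0:ℝ) < 1 - ε := by linarith
  set Sp := ∑ i, P i j * (1 + ε) ^ (∑ j', P i j' * x j') with hSp
  set Sph := ∑ i, P i j * (1 + ε) ^ (Ph i) with hSph
  set Sch := ∑ i, C i j * (1 - ε) ^ (Ch i) with hSch
  set Sc := ∑ i, C i j * (1 - ε) ^ (∑ j', C i j' * x j') with hSc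
  have hScnn : 0 ≤ Sc :=
    Finset.sum_nonneg fun i _ => mul_nonneg (hC i j) (Real.rpow_nonneg h1me.le _)
  have hSchnn : 0 ≤ Sch :=
    Finset.sum_nonneg fun i _ => mul_nonneg (hC i j) (Real.rpow_nonneg h1me.le _)
  -- Step 1 : Sp ≤ (1+ε) * Sph
  have h1 : Sp ≤ (1 + ε) * Sph := by
    rw [hSp, hSph, Finset.mul_sum]
    refine Finset.sum_le_sum fun i _ => ?_
    have hlt : (∑ j', P i j' * x j') ≤ Ph i + 1 := by
      have := (hPh i).1; linarith
    have := Real.rpow_le_rpow_of_exponent_le (by linarith : (1:ℝ) ≤ 1 + ε) hlt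
    have heq : (1 + ε) ^ (Ph i + 1) = (1 + ε) ^ (Ph i) * (1 + ε) :=
      Real.rpow_add_one (ne_of_gt h1ε) _
    calc P i j * (1 + ε) ^ (∑ j', P i j' * x j')
        ≤ P i j * ((1 + ε) ^ (Ph i) * (1 + ε)) := by
          rw [← heq]; exact mul_le_mul_of_nonneg_left this (hP i j)
      _ = (1 + ε) * (P i j * (1 + ε) ^ (Ph i)) := by ring
  -- Step 2 : Sch ≤ Sc / (1-ε)
  have h2 : Sch ≤ Sc / (1 - ε) := by
    rw [hSch, hSc, Finset.sum_div]
    refine Finset.sum_le_sum fun i _ => ?_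
    have hge : (∑ j', C i j' * x j') - 1 ≤ Ch i := (hCh i).1.le
    have hmono := Real.rpow_le_rpow_of_exponent_ge h1me (by linarith : 1 - ε ≤ 1) hge
    have heq : (1 - ε) ^ ((∑ j', C i j' * x j') - 1)
        = (1 - ε) ^ (∑ j', C i j' * x j') / (1 - ε) :=
      Real.rpow_sub_one (ne_of_gt h1me) _
    calc C i j * (1 - ε) ^ (Ch i)
        ≤ C i j * ((1 - ε) ^ (∑ j', C i j' * x j') / (1 - ε)) := by
          rw [← heq]; exact mul_le_mul_of_nonneg_left hmono (hC i j)
      _ = C i j * (1 - ε) ^ (∑ j', C i j' * x j') / (1 - ε) := by ring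
  -- Combine
  have hcoefnn : 0 ≤ (1 + ε) ^ 2 / (1 - ε) * lam0 :=
    mul_nonneg (div_nonneg (by positivity) h1me.le) hlam0
  have h3 : Sp ≤ (1 + ε) * ((1 + ε) ^ 2 / (1 - ε) * lam0 * (Sc / (1 - ε))) := by
    calc Sp ≤ (1 + ε) * Sph := h1
      _ ≤ (1 + ε) * ((1 + ε) ^ 2 / (1 - ε) * lam0 * Sch) :=
          mul_le_mul_of_nonneg_left htest h1ε.le
      _ ≤ (1 + ε) * ((1 + ε) ^ 2 / (1 - ε) * lam0 * (Sc / (1 - ε))) :=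
          mul_le_mul_of_nonneg_left (mul_le_mul_of_nonneg_left h2 hcoefnn) h1ε.le
  have hcoef : (1 + ε) ^ 3 ≤ (1 + 7 * ε) * (1 - ε) ^ 2 := by nlinarith [hε0.le, sq_nonneg ε]
  have h4 : (1 + ε) * ((1 + ε) ^ 2 / (1 - ε) * lam0 * (Sc / (1 - ε)))
      ≤ (1 + 7 * ε) * lam0 * Sc := by
    have heq : (1 + ε) * ((1 + ε) ^ 2 / (1 - ε) * lam0 * (Sc / (1 - ε)))
        = (1 + ε) ^ 3 * lam0 * Sc / (1 - ε) ^ 2 := by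
      field_simp
    rw [heq, div_le_iff₀ (by positivity)]
    have hls : 0 ≤ lam0 * Sc := mul_nonneg hlam0 hScnn
    nlinarith [mul_le_mul_of_nonneg_right hcoef hls]
  linarith
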